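/- Let p be a prime with p ≡ 3 (mod 4) and let D be an integer whose image in ℤ/pℤ is not a square. Then the equation p·x₁² + p·x₂² + x₃² = D·x₄² has no nontrivial solution in the field ℚ_p of p-adic numbers: if x₁, x₂, x₃, x₄ ∈ ℚ_p satisfy p·x₁² + p·x₂² + x₃² = D·x₄², then x₁ = x₂ = x₃ = x₄ = 0. -/

import Mathlib

section Aux

variable {p : ℕ} [Fact p.Prime]

private lemma aux_one_lt_p : (1:ℝ) < p := by
  exact_mod_cast (Fact.out : p.Prime).one_lt

private lemma aux_val_eq_zero {x : ℚ_[p]} (hx : ‖x‖ = 1) : x.valuation = 0 := by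
  have hx0 : x ≠ 0 := by intro h; simp [h] at hx
  have h := Padic.norm_eq_zpow_neg_valuation hx0
  rw [hx] at h
  have h2 : (p:ℝ) ^ (-x.valuation) = (p:ℝ) ^ (0:ℤ) := by simpa using h.symm
  have := (zpow_right_strictMono₀ aux_one_lt_p).injective h2
  omega

private lemma aux_val_neg (x : ℚ_[p]) : (-x).valuation = x.valuation := by
  by_cases hx : x = 0
  · rw [hx, neg_zero]
  · have := Padic.norm_eq_zpow_neg_valuation hx
    rw [← norm_neg] at this
    rw [Padic.norm_eq_zpow_neg_valuation (neg_ne_zero.mpr hx)] at this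
    have := (zpow_right_strictMono₀ (aux_one_lt_p (p := p))).injective this
    omega

private lemma aux_val_of_norm_eq {x y : ℚ_[p]} (hx : x ≠ 0) (hy : y ≠ 0)
    (h : ‖x‖ = ‖y‖) : x.valuation = y.valuation := by
  rw [Padic.norm_eq_zpow_neg_valuation hx, Padic.norm_eq_zpow_neg_valuation hy] at h
  have := (zpow_right_strictMono₀ (aux_one_lt_p (p := p))).injective h
  omega

private lemma aux_norm_lt {x y : ℚ_[p]} (hx : x ≠ 0) (hy : y ≠ 0)
    (h : x.valuation < y.valuation) : ‖y‖ < ‖x‖ := by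
  rw [Padic.norm_eq_zpow_neg_valuation hx, Padic.norm_eq_zpow_neg_valuation hy]
  exact (zpow_right_strictMono₀ (aux_one_lt_p (p := p))) (by omega)

/-- valuation of sum with strictly smaller first valuation -/
private lemma aux_val_add {x y : ℚ_[p]} (hx : x ≠ 0) (hy : y ≠ 0)
    (h : x.valuation < y.valuation) :
    x + y ≠ 0 ∧ (x + y).valuation = x.valuation := by
  have hn : ‖y‖ < ‖x‖ := aux_norm_lt hx hy h
  have hmax : ‖x + y‖ = max ‖x‖ ‖y‖ := Padic.add_eq_max_of_ne (ne_of_gt hn)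
  have hxy : ‖x + y‖ = ‖x‖ := by rw [hmax, max_eq_left hn.le]
  have hne : x + y ≠ 0 := by
    intro h0
    rw [h0, norm_zero] at hxy
    exact hx (norm_eq_zero.mp hxy.symm)
  exact ⟨hne, aux_val_of_norm_eq hne hx hxy⟩

private lemma aux_one_add_sq_norm (hp4 : p % 4 = 3) (t : ℤ_[p]) :
    ‖(1 + t ^ 2 : ℤ_[p])‖ = 1 := by
  rcases lt_or_eq_of_le (PadicInt.norm_le_one (1 + t ^ 2)) with hlt | heq
  · exfalso
    have hmem : (1 + t ^ 2 : ℤ_[p]) ∈ IsLocalRing.maximalIdeal ℤ_[p] := by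
      rw [PadicInt.maximalIdeal_eq_span_p, Ideal.mem_span_singleton]
      exact (PadicInt.norm_lt_one_iff_dvd _).mp hlt
    have h0 : PadicInt.toZMod (1 + t ^ 2) = 0 := by
      rw [← RingHom.mem_ker, PadicInt.ker_toZMod]; exact hmem
    rw [map_add, map_one, map_pow] at h0
    have : IsSquare (-1 : ZMod p) := ⟨PadicInt.toZMod t, by linear_combination -h0⟩
    exact (ZMod.exists_sq_eq_neg_one_iff.mp this) hp4
  · exact heq

/-- core: sum of two squares, larger term first. -/
private lemma aux_sq_add_sq_core (hp4 : p % 4 = 3) {a b : ℚ_[p]} (ha : a ≠ 0)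
    (hba : ‖b‖ ≤ ‖a‖) :
    a ^ 2 + b ^ 2 ≠ 0 ∧ (a ^ 2 + b ^ 2).valuation = 2 * a.valuation := by
  have ht : ‖b / a‖ ≤ 1 := by
    rw [norm_div]
    exact div_le_one_of_le₀ hba (norm_nonneg a)
  set t : ℤ_[p] := ⟨b / a, ht⟩ with htdef
  have hcoe : ((1 + t ^ 2 : ℤ_[p]) : ℚ_[p]) = 1 + (b / a) ^ 2 := by push_cast [htdef]; rfl
  have hu : ‖(1 + (b / a) ^ 2 : ℚ_[p])‖ = 1 := by
    rw [← hcoe, ← PadicInt.norm_def]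
    exact aux_one_add_sq_norm hp4 t
  have hu0 : (1 + (b / a) ^ 2 : ℚ_[p]) ≠ 0 := by
    intro h0; rw [h0, norm_zero] at hu; norm_num at hu
  have hfact : a ^ 2 + b ^ 2 = a ^ 2 * (1 + (b / a) ^ 2) := by
    field_simp
  have ha2 : a ^ 2 ≠ 0 := pow_ne_zero 2 ha
  have hne : a ^ 2 + b ^ 2 ≠ 0 := by rw [hfact]; exact mul_ne_zero ha2 hu0
  refine ⟨hne, ?_⟩
  rw [hfact, Padic.valuation_mul ha2 hu0, aux_val_eq_zero hu, add_zero,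
    show a ^ 2 = a * a by ring, Padic.valuation_mul ha ha]
  ring

private lemma aux_sq_add_sq (hp4 : p % 4 = 3) {a b : ℚ_[p]} (hab : ¬(a = 0 ∧ b = 0)) :
    a ^ 2 + b ^ 2 ≠ 0 ∧ ∃ k : ℤ, (a ^ 2 + b ^ 2).valuation = 2 * k := by
  rcases le_total ‖b‖ ‖a‖ with hba | hab'
  · have ha : a ≠ 0 := by
      intro h0
      rw [h0, norm_zero] at hba
      exact hab ⟨h0, norm_eq_zero.mp (le_antisymm hba (norm_nonneg b))⟩
    obtain ⟨h1, h2⟩ := aux_sq_add_sq_core hp4 ha hba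
    exact ⟨h1, a.valuation, h2⟩
  · have hb : b ≠ 0 := by
      intro h0
      rw [h0, norm_zero] at hab'
      exact hab ⟨norm_eq_zero.mp (le_antisymm hab' (norm_nonneg a)), h0⟩
    obtain ⟨h1, h2⟩ := aux_sq_add_sq_core hp4 hb hab'
    rw [add_comm (a^2)] at *
    exact ⟨h1, b.valuation, h2⟩

end Aux

/-- Let `p ≡ 3 (mod 4)` be prime and `D` an integer which is not a square modulo `p`.
Then `p·x₁² + p·x₂² + x₃² = D·x₄²` has no nontrivial solution over `ℚ_p`. -/
theorem padic_no_nontrivial_solution_of_nonsquare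
    (p : ℕ) [Fact p.Prime] (hp4 : p % 4 = 3) (D : ℤ)
    (hD : ¬ IsSquare ((D : ZMod p)))
    (x₁ x₂ x₃ x₄ : ℚ_[p])
    (h : (p : ℚ_[p]) * x₁ ^ 2 + (p : ℚ_[p]) * x₂ ^ 2 + x₃ ^ 2 = (D : ℚ_[p]) * x₄ ^ 2) :
    x₁ = 0 ∧ x₂ = 0 ∧ x₃ = 0 ∧ x₄ = 0 := by
  have hpprime : p.Prime := Fact.out
  have hp0 : (p : ℚ_[p]) ≠ 0 := Nat.cast_ne_zero.mpr hpprime.ne_zero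
  -- D is not divisible by p
  have hpD : ¬ ((p : ℤ) ∣ D) := by
    intro hdvd
    exact hD (by rw [(ZMod.intCast_zmod_eq_zero_iff_dvd D p).mpr hdvd]; exact ⟨0, by ring⟩)
  have hDnorm : ‖(D : ℚ_[p])‖ = 1 := by
    refine le_antisymm (Padic.norm_int_le_one D) ?_
    by_contra hlt
    exact hpD ((Padic.norm_intCast_lt_one_iff (k := D)).mp (lt_of_not_ge hlt))
  have hD0 : (D : ℚ_[p]) ≠ 0 := by
    intro h0; rw [h0, norm_zero] at hDnorm; norm_num at hDnorm
  have hDval : (D : ℚ_[p]).valuation = 0 := aux_val_eq_zero hDnorm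
  by_cases hx4 : x₄ = 0
  · -- equation: p(x₁²+x₂²) + x₃² = 0
    subst hx4
    rw [zero_pow (by norm_num), mul_zero] at h
    have h12 : x₁ = 0 ∧ x₂ = 0 := by
      by_contra hc
      obtain ⟨hs0, k, hk⟩ := aux_sq_add_sq hp4 hc
      have hps : (p : ℚ_[p]) * (x₁ ^ 2 + x₂ ^ 2) = -(x₃ ^ 2) := by linear_combination h
      have hps0 : (p : ℚ_[p]) * (x₁ ^ 2 + x₂ ^ 2) ≠ 0 := mul_ne_zero hp0 hs0
      have hx30 : x₃ ≠ 0 := fun h0 => hps0 (by rw [hps, h0]; ring)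
      have hv1 : ((p : ℚ_[p]) * (x₁ ^ 2 + x₂ ^ 2)).valuation = 1 + 2 * k := by
        rw [Padic.valuation_mul hp0 hs0, Padic.valuation_p, hk]
      have hv2 : (-(x₃ ^ 2) : ℚ_[p]).valuation = 2 * x₃.valuation := by
        rw [show -(x₃ ^ 2) = (-x₃) * x₃ by ring,
          Padic.valuation_mul (neg_ne_zero.mpr hx30) hx30, aux_val_neg]
        ring
      rw [hps, hv2] at hv1
      omega
    obtain ⟨h1, h2⟩ := h12
    refine ⟨h1, h2, ?_, rfl⟩
    rw [h1, h2] at h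
    simpa using pow_eq_zero_iff (n := 2) (by norm_num) |>.mp (by linear_combination h)
  · -- divide by x₄²
    exfalso
    set y₁ := x₁ / x₄
    set y₂ := x₂ / x₄
    set y₃ := x₃ / x₄
    have h' : (p : ℚ_[p]) * y₁ ^ 2 + (p : ℚ_[p]) * y₂ ^ 2 + y₃ ^ 2 = D := by
      simp only [y₁, y₂, y₃]; field_simp
      linear_combination h
    set s : ℚ_[p] := y₁ ^ 2 + y₂ ^ 2 with hs
    have hsplit : (p : ℚ_[p]) * s + y₃ ^ 2 = D := by rw [hs]; ring_nf; linear_combination h'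
    -- Claim: ‖p*s‖ < 1
    have hps_lt : ‖(p : ℚ_[p]) * s‖ < 1 := by
      by_cases hs0 : s = 0
      · rw [hs0, mul_zero, norm_zero]; norm_num
      · have hy12 : ¬(y₁ = 0 ∧ y₂ = 0) := by
          rintro ⟨e1, e2⟩; rw [hs, e1, e2] at hs0; simp at hs0
        obtain ⟨-, k, hk⟩ := aux_sq_add_sq hp4 hy12
        have hps0 : (p : ℚ_[p]) * s ≠ 0 := mul_ne_zero hp0 hs0
        have hvps : ((p : ℚ_[p]) * s).valuation = 1 + 2 * k := by
          rw [Padic.valuation_mul hp0 hs0, Padic.valuation_p, hs, hk]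
        -- show valuation ≥ 1
        have hvpos : 1 ≤ ((p : ℚ_[p]) * s).valuation := by
          by_contra hneg
          have hvlt : ((p : ℚ_[p]) * s).valuation < (D : ℚ_[p]).valuation := by omega
          obtain ⟨hne, hveq⟩ := aux_val_add hps0 hD0 hvlt
          have hnD : (-(D : ℚ_[p])).valuation = (D : ℚ_[p]).valuation := aux_val_neg _
          have hvlt' : ((p : ℚ_[p]) * s).valuation < (-(D : ℚ_[p])).valuation := by
            rw [hnD]; exact hvlt
          obtain ⟨hne', hveq'⟩ := aux_val_add hps0 (neg_ne_zero.mpr hD0) hvlt'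
          have heq3 : (p : ℚ_[p]) * s + -(D : ℚ_[p]) = -(y₃ ^ 2) := by
            linear_combination hsplit
          rw [heq3] at hne' hveq'
          have hy30 : y₃ ≠ 0 := by
            intro h0; rw [h0] at hne'; simp at hne'
          have : (-(y₃ ^ 2) : ℚ_[p]).valuation = 2 * y₃.valuation := by
            rw [show -(y₃ ^ 2) = (-y₃) * y₃ by ring,
              Padic.valuation_mul (neg_ne_zero.mpr hy30) hy30, aux_val_neg]
            ring
          rw [this] at hveq'
          omega
        rw [Padic.norm_eq_zpow_neg_valuation hps0]
        calc ((p:ℝ)) ^ (-((p : ℚ_[p]) * s).valuation) ≤ (p:ℝ) ^ (-1 : ℤ) :=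
              ((zpow_right_strictMono₀ (aux_one_lt_p (p := p))).le_iff_le).mpr (by omega)
          _ < (p:ℝ) ^ (0 : ℤ) := (zpow_right_strictMono₀ (aux_one_lt_p (p := p))) (by omega)
          _ = 1 := zpow_zero _
    -- ‖y₃‖ ≤ 1
    have hy3norm : ‖y₃‖ ≤ 1 := by
      have hsq : y₃ ^ 2 = (D : ℚ_[p]) - (p : ℚ_[p]) * s := by linear_combination hsplit
      have : ‖y₃ ^ 2‖ ≤ max ‖(D : ℚ_[p])‖ ‖(p : ℚ_[p]) * s‖ := by
        rw [hsq, sub_eq_add_neg]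
        calc ‖(D : ℚ_[p]) + -((p : ℚ_[p]) * s)‖ ≤ max ‖(D : ℚ_[p])‖ ‖-((p : ℚ_[p]) * s)‖ :=
              Padic.nonarchimedean _ _
          _ = max ‖(D : ℚ_[p])‖ ‖(p : ℚ_[p]) * s‖ := by rw [norm_neg]
      have h1 : ‖y₃ ^ 2‖ ≤ 1 := le_trans this (max_le (le_of_eq hDnorm) hps_lt.le)
      rw [norm_pow] at h1
      nlinarith [norm_nonneg y₃]
    -- lift to ℤ_p and reduce mod p
    set z : ℤ_[p] := ⟨y₃, hy3norm⟩ with hz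
    have hcoez : ((z : ℤ_[p]) : ℚ_[p]) = y₃ := rfl
    have hdz : (((D : ℤ_[p]) - z ^ 2 : ℤ_[p]) : ℚ_[p]) = (p : ℚ_[p]) * s := by
      push_cast [hcoez]
      linear_combination -hsplit
    have hdznorm : ‖((D : ℤ_[p]) - z ^ 2 : ℤ_[p])‖ < 1 := by
      rw [PadicInt.norm_def, hdz]; exact hps_lt
    have hmem : ((D : ℤ_[p]) - z ^ 2 : ℤ_[p]) ∈ IsLocalRing.maximalIdeal ℤ_[p] := by
      rw [PadicInt.maximalIdeal_eq_span_p, Ideal.mem_span_singleton]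
      exact (PadicInt.norm_lt_one_iff_dvd _).mp hdznorm
    have h0 : PadicInt.toZMod ((D : ℤ_[p]) - z ^ 2) = 0 := by
      rw [← RingHom.mem_ker, PadicInt.ker_toZMod]; exact hmem
    rw [map_sub, map_pow, map_intCast] at h0
    exact hD ⟨PadicInt.toZMod z, by linear_combination h0⟩
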